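/- Let n ≥ 1 and let L_ideal, L_star be n×n complex matrices, with L_ideal = V D V⁻¹ for an invertible matrix V and diagonal matrix D, and with L_star diagonalizable. If ‖L_star − L_ideal‖_F < (π − ρ(L_ideal)) / κ(V), then: (i) every eigenvalue μ of L_star satisfies |Im(μ)| < π; (ii) the map μ ↦ exp(μ) is injective on the set of eigenvalues of L_star; and (iii) for every eigenvalue μ of L_star, the eigenspace ker(L_star − μ·I) equals the eigenspace ker(exp(L_star) − e^μ·I) of the matrix exponential exp(L_star). In particular, L_star is a logarithm of E_star = exp(L_star) lying in the principal branch and no eigenspace splitting occurs. -/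

import Mathlib

open scoped Matrix

/-- The Frobenius norm of a complex matrix: `‖M‖_F = sqrt (∑ j k, |M j k|²)`. -/
noncomputable def frobNorm {m n : Type*} [Fintype m] [Fintype n] (M : Matrix m n ℂ) : ℝ :=
  Real.sqrt (∑ j, ∑ k, ‖M j k‖ ^ 2)

/-- The spectral radius of a square complex matrix: the maximum modulus of its eigenvalues. -/
noncomputable def specRad {n : Type*} [Fintype n] [DecidableEq n] (A : Matrix n n ℂ) : ℝ :=
  sSup {r : ℝ | ∃ μ ∈ spectrum ℂ A, r = ‖μ‖}

namespace Stmt1Aux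

/-- Euclidean norm of a complex vector. -/
noncomputable def vnorm {n : Type*} [Fintype n] (x : n → ℂ) : ℝ :=
  Real.sqrt (∑ i, ‖x i‖ ^ 2)

lemma vnorm_nonneg {n : Type*} [Fintype n] (x : n → ℂ) : 0 ≤ vnorm x :=
  Real.sqrt_nonneg _

lemma frobNorm_nonneg {m n : Type*} [Fintype m] [Fintype n] (M : Matrix m n ℂ) :
    0 ≤ frobNorm M := Real.sqrt_nonneg _

lemma sq_vnorm {n : Type*} [Fintype n] (x : n → ℂ) :
    vnorm x ^ 2 = ∑ i, ‖x i‖ ^ 2 :=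
  Real.sq_sqrt (by positivity)

lemma vnorm_pos {n : Type*} [Fintype n] {x : n → ℂ} (hx : x ≠ 0) : 0 < vnorm x := by
  obtain ⟨i, hi⟩ := Function.ne_iff.mp hx
  refine Real.sqrt_pos.mpr (Finset.sum_pos' (fun j _ => by positivity) ?_)
  exact ⟨i, Finset.mem_univ i, pow_pos (norm_pos_iff.mpr hi) 2⟩

lemma vnorm_mulVec_le {m n : Type*} [Fintype m] [Fintype n] (A : Matrix m n ℂ) (x : n → ℂ) :
    vnorm (A *ᵥ x) ≤ frobNorm A * vnorm x := by
  have key : ∑ j, ‖(A *ᵥ x) j‖ ^ 2 ≤ (∑ j, ∑ k, ‖A j k‖ ^ 2) * (∑ k, ‖x k‖ ^ 2) := by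
    rw [Finset.sum_mul]
    refine Finset.sum_le_sum fun j _ => ?_
    have h1 : ‖(A *ᵥ x) j‖ ≤ ∑ k, ‖A j k‖ * ‖x k‖ := by
      have : (A *ᵥ x) j = ∑ k, A j k * x k := rfl
      rw [this]
      refine (norm_sum_le _ _).trans_eq ?_
      simp [norm_mul]
    calc ‖(A *ᵥ x) j‖ ^ 2 ≤ (∑ k, ‖A j k‖ * ‖x k‖) ^ 2 := by
          exact pow_le_pow_left₀ (norm_nonneg _) h1 2
      _ ≤ (∑ k, ‖A j k‖ ^ 2) * ∑ k, ‖x k‖ ^ 2 :=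
          Finset.sum_mul_sq_le_sq_mul_sq _ _ _
  calc vnorm (A *ᵥ x) = Real.sqrt (∑ j, ‖(A *ᵥ x) j‖ ^ 2) := rfl
    _ ≤ Real.sqrt ((∑ j, ∑ k, ‖A j k‖ ^ 2) * (∑ k, ‖x k‖ ^ 2)) := Real.sqrt_le_sqrt key
    _ = frobNorm A * vnorm x := by
        rw [Real.sqrt_mul (by positivity)]; rfl

lemma frobNorm_pos {m n : Type*} [Fintype m] [Fintype n] {M : Matrix m n ℂ}
    (hM : M ≠ 0) : 0 < frobNorm M := by
  have : ∃ j k, M j k ≠ 0 := by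
    by_contra h
    push_neg at h
    exact hM (by ext j k; exact h j k)
  obtain ⟨j, k, hjk⟩ := this
  refine Real.sqrt_pos.mpr (Finset.sum_pos' (fun a _ => Finset.sum_nonneg fun b _ => by positivity) ?_)
  refine ⟨j, Finset.mem_univ j, Finset.sum_pos' (fun b _ => by positivity) ?_⟩
  exact ⟨k, Finset.mem_univ k, pow_pos (norm_pos_iff.mpr hjk) 2⟩

lemma mem_spectrum_iff_eigen {n : ℕ} (A : Matrix (Fin n) (Fin n) ℂ) (μ : ℂ) :
    μ ∈ spectrum ℂ A ↔ ∃ v ≠ 0, A *ᵥ v = μ • v := by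
  have hmv : ∀ v : Fin n → ℂ,
      (algebraMap ℂ (Matrix (Fin n) (Fin n) ℂ) μ - A) *ᵥ v = μ • v - A *ᵥ v := by
    intro v
    rw [Matrix.sub_mulVec, Algebra.algebraMap_eq_smul_one, Matrix.smul_mulVec,
      Matrix.one_mulVec]
  rw [spectrum.mem_iff, Matrix.isUnit_iff_isUnit_det, isUnit_iff_ne_zero, not_not,
    ← Matrix.exists_mulVec_eq_zero_iff]
  constructor
  · rintro ⟨v, hv, h⟩
    rw [hmv v, sub_eq_zero] at h
    exact ⟨v, hv, h.symm⟩
  · rintro ⟨v, hv, h⟩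
    exact ⟨v, hv, by rw [hmv v, h, sub_self]⟩

lemma spectrum_conj {n : ℕ} (W A : Matrix (Fin n) (Fin n) ℂ) (hW : IsUnit W) :
    spectrum ℂ (W * A * W⁻¹) = spectrum ℂ A := by
  obtain ⟨u, rfl⟩ := hW
  rw [← Matrix.coe_units_inv]
  exact spectrum.units_conjugate

lemma eig_conj_diag {n : ℕ} (W : Matrix (Fin n) (Fin n) ℂ) (hW : IsUnit W)
    (f : Fin n → ℂ) (c : ℂ) :
    {v : Fin n → ℂ | (W * Matrix.diagonal f * W⁻¹) *ᵥ v = c • v}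
      = {v : Fin n → ℂ | ∀ i, f i ≠ c → (W⁻¹ *ᵥ v) i = 0} := by
  have hdet : IsUnit W.det := (Matrix.isUnit_iff_isUnit_det W).mp hW
  ext v
  simp only [Set.mem_setOf_eq]
  set u := W⁻¹ *ᵥ v with hu
  have hvu : W *ᵥ u = v := by
    rw [hu, Matrix.mulVec_mulVec, Matrix.mul_nonsing_inv _ hdet, Matrix.one_mulVec]
  have e1 : (W * Matrix.diagonal f * W⁻¹) *ᵥ v = W *ᵥ (Matrix.diagonal f *ᵥ u) := by
    rw [Matrix.mulVec_mulVec, Matrix.mulVec_mulVec, Matrix.mul_assoc]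
  have hcanc : ∀ a b : Fin n → ℂ, W *ᵥ a = W *ᵥ b → a = b := by
    intro a b hab
    have := congrArg (fun w => W⁻¹ *ᵥ w) hab
    simpa only [Matrix.mulVec_mulVec, Matrix.nonsing_inv_mul _ hdet,
      Matrix.one_mulVec] using this
  have hcond : (W * Matrix.diagonal f * W⁻¹) *ᵥ v = c • v ↔
      Matrix.diagonal f *ᵥ u = c • u := by
    constructor
    · intro h
      rw [e1] at h
      have h2 : c • v = W *ᵥ (c • u) := by rw [Matrix.mulVec_smul, hvu]
      rw [h2] at h
      exact hcanc _ _ h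
    · intro h
      rw [e1, h, Matrix.mulVec_smul, hvu]
  rw [hcond]
  constructor
  · intro h i hne
    have := congrFun h i
    rw [Matrix.mulVec_diagonal] at this
    have h0 : (f i - c) * u i = 0 := by
      have : f i * u i = c * u i := this
      ring_nf
      linear_combination this
    rcases mul_eq_zero.mp h0 with h' | h'
    · exact absurd (sub_eq_zero.mp h') hne
    · exact h'
  · intro h
    funext i
    rw [Matrix.mulVec_diagonal]
    by_cases hc : f i = c
    · simp [hc, Pi.smul_apply]
    · simp [h i hc, Pi.smul_apply]

end Stmt1Aux

open Stmt1Aux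

/-- If `L_ideal = V D V⁻¹`, `L_star` is diagonalizable and
`‖L_star − L_ideal‖_F < (π − ρ(L_ideal)) / κ(V)`, then (i) every eigenvalue `μ` of `L_star`
has `|Im μ| < π`, (ii) `exp` is injective on the spectrum of `L_star`, and (iii) for every
eigenvalue `μ` of `L_star` the eigenspace of `L_star` for `μ` equals the eigenspace of the
matrix exponential `exp L_star` for `e^μ`. -/
theorem stmt1 (n : ℕ) (hn : 1 ≤ n) (Lideal Lstar V D : Matrix (Fin n) (Fin n) ℂ)
    (hV : IsUnit V) (hD : D.IsDiag) (hdiag : Lideal = V * D * V⁻¹)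
    (hstar : ∃ (W Dstar : Matrix (Fin n) (Fin n) ℂ),
      IsUnit W ∧ Dstar.IsDiag ∧ Lstar = W * Dstar * W⁻¹)
    (hclose : frobNorm (Lstar - Lideal) <
      (Real.pi - specRad Lideal) / (frobNorm V * frobNorm V⁻¹)) :
    (∀ μ ∈ spectrum ℂ Lstar, |μ.im| < Real.pi) ∧
    Set.InjOn Complex.exp (spectrum ℂ Lstar) ∧
    (∀ μ ∈ spectrum ℂ Lstar,
      {v : Fin n → ℂ | Lstar *ᵥ v = μ • v} =
        {v : Fin n → ℂ | (NormedSpace.exp Lstar) *ᵥ v = Complex.exp μ • v}) := by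
  obtain ⟨W, Dstar, hW, hDs, hLW⟩ := hstar
  haveI : Nonempty (Fin n) := ⟨⟨0, hn⟩⟩
  set d : Fin n → ℂ := fun i => D i i with hd
  set f : Fin n → ℂ := fun i => Dstar i i with hf
  have hDd : D = Matrix.diagonal d := (hD.diagonal_diag).symm
  have hDf : Dstar = Matrix.diagonal f := (hDs.diagonal_diag).symm
  have hdetV : IsUnit V.det := (Matrix.isUnit_iff_isUnit_det V).mp hV
  have hspecI : spectrum ℂ Lideal = Set.range d := by
    rw [hdiag, spectrum_conj _ _ hV, hDd, spectrum_diagonal]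
  have hspecS : spectrum ℂ Lstar = Set.range f := by
    rw [hLW, spectrum_conj _ _ hW, hDf, spectrum_diagonal]
  -- spectral radius bound
  have hrad : ∀ i, ‖d i‖ ≤ specRad Lideal := by
    intro i
    have hset : {r : ℝ | ∃ μ ∈ spectrum ℂ Lideal, r = ‖μ‖}
        = Set.range (fun i => ‖d i‖) := by
      ext r
      simp only [Set.mem_setOf_eq, hspecI, Set.mem_range]
      constructor
      · rintro ⟨μ, ⟨j, rfl⟩, rfl⟩; exact ⟨j, rfl⟩
      · rintro ⟨j, rfl⟩; exact ⟨d j, ⟨j, rfl⟩, rfl⟩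
    rw [specRad, hset]
    exact le_csSup ((Set.finite_range _).bddAbove) ⟨i, rfl⟩
  -- positivity of the condition number
  have hVn : V ≠ 0 := by
    intro h
    have := hV
    rw [h] at this
    exact one_ne_zero ((isUnit_zero_iff.mp this).symm)
  have hVin : (V⁻¹ : Matrix (Fin n) (Fin n) ℂ) ≠ 0 := by
    have hu : IsUnit (V⁻¹ : Matrix (Fin n) (Fin n) ℂ) :=
      ⟨⟨V⁻¹, V, Matrix.nonsing_inv_mul _ hdetV, Matrix.mul_nonsing_inv _ hdetV⟩, rfl⟩
    intro h
    rw [h] at hu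
    exact one_ne_zero ((isUnit_zero_iff.mp hu).symm)
  set κ := frobNorm V * frobNorm V⁻¹ with hκdef
  have hκ : 0 < κ := mul_pos (frobNorm_pos hVn) (frobNorm_pos hVin)
  set ε := frobNorm (Lstar - Lideal) with hε
  have hε0 : 0 ≤ ε := frobNorm_nonneg _
  have hklt : κ * ε < Real.pi - specRad Lideal := by
    have := (lt_div_iff₀ hκ).mp hclose
    linarith [this]
  -- Bauer–Fike
  have hBF : ∀ μ ∈ spectrum ℂ Lstar, ∃ i, ‖μ - d i‖ ≤ κ * ε := by
    intro μ hμ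
    obtain ⟨v, hv0, hv⟩ := (mem_spectrum_iff_eigen Lstar μ).mp hμ
    set u := V⁻¹ *ᵥ v with hu
    have hvu : V *ᵥ u = v := by
      rw [hu, Matrix.mulVec_mulVec, Matrix.mul_nonsing_inv _ hdetV, Matrix.one_mulVec]
    have hu0 : u ≠ 0 := by
      intro h
      exact hv0 (by rw [← hvu, h, Matrix.mulVec_zero])
    have eI : V⁻¹ *ᵥ (Lideal *ᵥ v) = D *ᵥ u := by
      rw [hdiag, Matrix.mulVec_mulVec, Matrix.mulVec_mulVec, ← Matrix.mul_assoc,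
        ← Matrix.mul_assoc, Matrix.nonsing_inv_mul _ hdetV, Matrix.one_mul]
    have hkey : μ • u - D *ᵥ u = V⁻¹ *ᵥ ((Lstar - Lideal) *ᵥ v) := by
      rw [hu, Matrix.sub_mulVec, Matrix.mulVec_sub, hv, eI, Matrix.mulVec_smul, hu]
    -- the minimizing index
    obtain ⟨i0, -, hi0⟩ := Finset.exists_min_image Finset.univ (fun i => ‖μ - d i‖)
      ⟨Classical.arbitrary (Fin n), Finset.mem_univ _⟩
    refine ⟨i0, ?_⟩
    have hcomp : ∀ i, (μ • u - D *ᵥ u) i = (μ - d i) * u i := by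
      intro i
      rw [hDd]
      simp only [Pi.sub_apply, Pi.smul_apply, Matrix.mulVec_diagonal, smul_eq_mul]
      ring
    have hsq : (‖μ - d i0‖ * vnorm u) ^ 2 ≤ vnorm (μ • u - D *ᵥ u) ^ 2 := by
      rw [mul_pow, sq_vnorm, sq_vnorm, Finset.mul_sum]
      refine Finset.sum_le_sum fun i _ => ?_
      rw [hcomp i, norm_mul, mul_pow]
      exact mul_le_mul_of_nonneg_right
        (pow_le_pow_left₀ (norm_nonneg _) (hi0 i (Finset.mem_univ i)) 2) (by positivity)
    have h2 : ‖μ - d i0‖ * vnorm u ≤ vnorm (μ • u - D *ᵥ u) := by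
      have hl : 0 ≤ ‖μ - d i0‖ * vnorm u := mul_nonneg (norm_nonneg _) (vnorm_nonneg u)
      nlinarith [vnorm_nonneg (μ • u - D *ᵥ u)]
    have h3 : vnorm (μ • u - D *ᵥ u) ≤ κ * ε * vnorm u := by
      rw [hkey]
      calc vnorm (V⁻¹ *ᵥ ((Lstar - Lideal) *ᵥ v))
          ≤ frobNorm V⁻¹ * vnorm ((Lstar - Lideal) *ᵥ v) := vnorm_mulVec_le _ _
        _ ≤ frobNorm V⁻¹ * (ε * vnorm v) := by
            refine mul_le_mul_of_nonneg_left ?_ (frobNorm_nonneg _)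
            exact vnorm_mulVec_le _ _
        _ = frobNorm V⁻¹ * (ε * vnorm (V *ᵥ u)) := by rw [hvu]
        _ ≤ frobNorm V⁻¹ * (ε * (frobNorm V * vnorm u)) := by
            refine mul_le_mul_of_nonneg_left
              (mul_le_mul_of_nonneg_left (vnorm_mulVec_le _ _) hε0) (frobNorm_nonneg _)
        _ = κ * ε * vnorm u := by rw [hκdef]; ring
    have hup : 0 < vnorm u := vnorm_pos hu0
    exact le_of_mul_le_mul_right (h2.trans h3) hup
  -- Part (i)
  have part1 : ∀ μ ∈ spectrum ℂ Lstar, |μ.im| < Real.pi := by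
    intro μ hμ
    obtain ⟨i, hi⟩ := hBF μ hμ
    have h1 : |μ.im| ≤ |(d i).im| + |(μ - d i).im| := by
      have : μ.im = (d i).im + (μ - d i).im := by simp [Complex.sub_im]
      rw [this]
      exact abs_add_le _ _
    have h2 : |(d i).im| ≤ ‖d i‖ := Complex.abs_im_le_norm _
    have h3 : |(μ - d i).im| ≤ ‖μ - d i‖ := Complex.abs_im_le_norm _
    have h4 := hrad i
    linarith
  -- Part (ii)
  have part2 : Set.InjOn Complex.exp (spectrum ℂ Lstar) := by
    intro x hx y hy hxy
    rw [Complex.exp_eq_exp_iff_exists_int] at hxy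
    obtain ⟨k, hk⟩ := hxy
    have him : x.im = y.im + (k : ℝ) * (2 * Real.pi) := by
      have := congrArg Complex.im hk
      simp only [Complex.add_im, Complex.mul_im, Complex.mul_re, Complex.intCast_re,
        Complex.intCast_im, Complex.I_re, Complex.I_im, Complex.ofReal_re, Complex.ofReal_im,
        Complex.re_ofNat, Complex.im_ofNat] at this
      rw [this]; ring
    have hxim := part1 x hx
    have hyim := part1 y hy
    have hpi : 0 < Real.pi := Real.pi_pos
    have hk0 : k = 0 := by
      by_contra hk0
      have h1 : (1 : ℝ) ≤ |(k : ℝ)| := by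
        rw [← Int.cast_abs]
        exact_mod_cast Int.one_le_abs hk0
      have h2 : |(k : ℝ) * (2 * Real.pi)| = |x.im - y.im| := by
        rw [him]; ring_nf
      rw [abs_mul, abs_of_pos (by linarith : (0:ℝ) < 2 * Real.pi)] at h2
      obtain ⟨a, b⟩ := abs_lt.mp hxim
      obtain ⟨c, e⟩ := abs_lt.mp hyim
      have h3 : |x.im - y.im| < 2 * Real.pi := by
        rw [abs_sub_lt_iff]
        constructor <;> linarith
      nlinarith
    rw [hk0] at hk
    simpa using hk
  refine ⟨part1, part2, ?_⟩
  -- Part (iii)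
  intro μ hμ
  have hexp : NormedSpace.exp Lstar
      = W * Matrix.diagonal (fun i => Complex.exp (f i)) * W⁻¹ := by
    rw [hLW, hDf, Matrix.exp_conj _ _ hW, Matrix.exp_diagonal, Pi.exp_def]
    congr 2
    funext i
    rw [Complex.exp_eq_exp_ℂ]
  have hE1 : {v : Fin n → ℂ | Lstar *ᵥ v = μ • v}
      = {v : Fin n → ℂ | ∀ i, f i ≠ μ → (W⁻¹ *ᵥ v) i = 0} := by
    rw [hLW, hDf]
    exact eig_conj_diag W hW f μ
  have hE2 : {v : Fin n → ℂ | (NormedSpace.exp Lstar) *ᵥ v = Complex.exp μ • v}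
      = {v : Fin n → ℂ | ∀ i, Complex.exp (f i) ≠ Complex.exp μ → (W⁻¹ *ᵥ v) i = 0} := by
    rw [hexp]
    exact eig_conj_diag W hW _ _
  rw [hE1, hE2]
  ext v
  simp only [Set.mem_setOf_eq]
  refine forall_congr' fun i => ?_
  have hiff : f i = μ ↔ Complex.exp (f i) = Complex.exp μ := by
    constructor
    · intro h; rw [h]
    · intro h
      exact part2 (by rw [hspecS]; exact ⟨i, rfl⟩) hμ h
  constructor
  · intro h hne
    exact h (fun heq => hne (hiff.mp heq))
  · intro h hne
    exact h (fun heq => hne (hiff.mpr heq))
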